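/- arXiv:2504.11410 — 2 statements merged into one kernel-verified Lean document; each statement's English description precedes it below -/
import Mathlib

section
/- Suppose xᵏ + s ∈ prox_{τ g}(xᵏ − τ ∇f(xᵏ)) with τ ≤ 1/(L + 2a), and f satisfies the descent inequality f(xᵏ + s) ≤ f(xᵏ) + ⟨∇f(xᵏ), s⟩ + (L/2)‖s‖². Then with φ = f + g one has φ(xᵏ + s) ≤ φ(xᵏ) − a‖s‖². -/
open scoped InnerProductSpace

/-- The prox set (possibly multivalued proximal mapping). -/
noncomputable def proxSet {E : Type*} [NormedAddCommGroup E]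
    (g : E → EReal) (τ : ℝ) (x : E) : Set E :=
  {u | ∀ w, g u + ((1 / (2 * τ) * ‖x - u‖ ^ 2 : ℝ) : EReal)
        ≤ g w + ((1 / (2 * τ) * ‖x - w‖ ^ 2 : ℝ) : EReal)}

/-- `g + (1/(2τ))‖·‖²` is bounded below. -/
def ProxBddAt {E : Type*} [NormedAddCommGroup E] (g : E → EReal) (τ : ℝ) : Prop :=
  ∃ β : ℝ, ∀ x, (β : EReal) ≤ g x + ((1 / (2 * τ) * ‖x‖ ^ 2 : ℝ) : EReal)

/-- `g` is proper: never `⊥` and somewhere finite. -/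
def ProperFn {E : Type*} [NormedAddCommGroup E] (g : E → EReal) : Prop :=
  (∀ x, g x ≠ ⊥) ∧ ∃ x, g x < ⊤

theorem stmt8 {n : ℕ} (f : EuclideanSpace ℝ (Fin n) → ℝ)
    (g : EuclideanSpace ℝ (Fin n) → EReal)
    (hproper : ProperFn g) (hlsc : LowerSemicontinuous g)
    (xk s v : EuclideanSpace ℝ (Fin n)) (hxk : g xk < ⊤)
    (a L τ : ℝ) (ha : 0 < a) (hL : 0 ≤ L) (hτ : 0 < τ)
    (hτle : τ ≤ 1 / (L + 2 * a))
    (hprox : xk + s ∈ proxSet g τ (xk - τ • v))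
    (hdesc : f (xk + s) ≤ f xk + ⟪v, s⟫_ℝ + L / 2 * ‖s‖ ^ 2) :
    (f (xk + s) : EReal) + g (xk + s) + ((a * ‖s‖ ^ 2 : ℝ) : EReal)
      ≤ (f xk : EReal) + g xk := by
  obtain ⟨hbot, -⟩ := hproper
  have key := hprox xk
  have e1 : xk - τ • v - (xk + s) = -(τ • v + s) := by abel
  have e2 : xk - τ • v - xk = -(τ • v) := by abel
  rw [e1, e2, norm_neg, norm_neg] at key
  have hbk : g xk ≠ ⊥ := hbot xk
  have htk : g xk ≠ ⊤ := hxk.ne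
  set b := (g xk).toReal with hb
  have hgb : g xk = (b : EReal) := (EReal.coe_toReal htk hbk).symm
  have hne : g (xk + s) ≠ ⊤ := by
    intro h
    rw [h, EReal.top_add_coe, hgb, ← EReal.coe_add] at key
    exact EReal.coe_ne_top _ (top_le_iff.mp key)
  have hnb : g (xk + s) ≠ ⊥ := hbot _
  set c := (g (xk + s)).toReal with hc
  have hgc : g (xk + s) = (c : EReal) := (EReal.coe_toReal hne hnb).symm
  rw [hgc, hgb] at key ⊢
  rw [← EReal.coe_add, ← EReal.coe_add] at key
  rw [← EReal.coe_add, ← EReal.coe_add, ← EReal.coe_add]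
  rw [EReal.coe_le_coe_iff] at key ⊢
  have hexp : ‖τ • v + s‖ ^ 2 = ‖τ • v‖ ^ 2 + 2 * (τ * ⟪v, s⟫_ℝ) + ‖s‖ ^ 2 := by
    have h := @norm_add_sq_real (EuclideanSpace ℝ (Fin n)) _ _ (τ • v) s
    rw [h, real_inner_smul_left]
  have h2τ : (0:ℝ) < 2 * τ := by linarith
  have key2 : c + ⟪v, s⟫_ℝ + 1 / (2 * τ) * ‖s‖ ^ 2 ≤ b := by
    rw [hexp, mul_add, mul_add] at key
    have ht : 1 / (2 * τ) * (2 * (τ * ⟪v, s⟫_ℝ)) = ⟪v, s⟫_ℝ := by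
      field_simp
    linarith [key, ht]
  have hpos : (0:ℝ) < L + 2 * a := by linarith
  have hτ1 : τ * (L + 2 * a) ≤ 1 := by
    rw [le_div_iff₀ hpos] at hτle; linarith
  have h1 : L / 2 + a ≤ 1 / (2 * τ) := by
    rw [le_div_iff₀ h2τ]; nlinarith
  nlinarith [key2, hdesc, mul_le_mul_of_nonneg_right h1 (sq_nonneg ‖s‖)]
end

section
/- Let f : ℝⁿ → ℝ be differentiable with locally Lipschitz gradient on dom g, g proper lsc prox-bounded, and φ = f + g bounded below. Suppose there is a sequence (x^{k_ν}) converging to x* ∈ dom g, stepsizes τ_{k_ν} → 0⁺, and vectors d̂^{k_ν} ≠ 0 with x^{k_ν} + d̂^{k_ν} ∈ prox_{β⁻¹ τ_{k_ν} g}(x^{k_ν} − β⁻¹ τ_{k_ν} ∇f(x^{k_ν})) (for fixed β ∈ (0,1)) such that the sufficient decrease fails: φ(x^{k_ν} + d̂^{k_ν}) > φ(x^{k_ν}) − a‖d̂^{k_ν}‖² for all ν, with a > 0. Then a contradiction follows; i.e., such a sequence cannot exist, so for any bounded subsequence of iterates the accepted stepsizes are bounded away from zero. -/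
open scoped InnerProductSpace

open Filter Topology Metric Set

/-- Descent lemma: quadratic upper bound from a Lipschitz gradient on a ball. -/
lemma descent_lemma {E : Type*} [NormedAddCommGroup E] [InnerProductSpace ℝ E]
    [CompleteSpace E]
    (f : E → ℝ) (f' : E → E) (hdiff : ∀ x, HasGradientAt f (f' x) x)
    (L : ℝ) (c : E) (ε : ℝ)
    (hlip : ∀ y ∈ ball c ε, ∀ z ∈ ball c ε, ‖f' y - f' z‖ ≤ L * ‖y - z‖)
    (p q : E) (hp : p ∈ ball c ε) (hq : q ∈ ball c ε) :
    f q ≤ f p + ⟪f' p, q - p⟫_ℝ + L / 2 * ‖q - p‖ ^ 2 := by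
  set v := q - p with hv
  have hmem : ∀ t : ℝ, t ∈ Icc (0:ℝ) 1 → p + t • v ∈ ball c ε := by
    intro t ht
    have : (1 - t) • p + t • q ∈ ball c ε :=
      (convex_ball c ε) hp hq (by linarith [ht.2]) ht.1 (by ring)
    convert this using 1
    rw [hv]; module
  have hderiv : ∀ t : ℝ, HasDerivAt (fun s : ℝ => f (p + s • v))
      ⟪f' (p + t • v), v⟫_ℝ t := by
    intro t
    have line : HasDerivAt (fun s : ℝ => p + s • v) v t := by
      simpa using ((hasDerivAt_id t).smul_const v).const_add p
    have := (hdiff (p + t • v)).hasFDerivAt.comp_hasDerivAt t line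
    exact this
  set h : ℝ → ℝ := fun t => f (p + t • v) - t * ⟪f' p, v⟫_ℝ - L / 2 * (t ^ 2 * ‖v‖ ^ 2)
    with hh
  have hderivh : ∀ t : ℝ, HasDerivAt h
      (⟪f' (p + t • v), v⟫_ℝ - ⟪f' p, v⟫_ℝ - L / 2 * (2 * t * ‖v‖ ^ 2)) t := by
    intro t
    have h1 : HasDerivAt (fun t : ℝ => t * ⟪f' p, v⟫_ℝ) ⟪f' p, v⟫_ℝ t := by
      simpa using (hasDerivAt_id t).mul_const ⟪f' p, v⟫_ℝ
    have h2 : HasDerivAt (fun t : ℝ => L / 2 * (t ^ 2 * ‖v‖ ^ 2))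
        (L / 2 * (2 * t * ‖v‖ ^ 2)) t := by
      have : HasDerivAt (fun t : ℝ => t ^ 2 * ‖v‖ ^ 2) (2 * t * ‖v‖ ^ 2) t := by
        simpa using (hasDerivAt_pow 2 t).mul_const (‖v‖ ^ 2)
      simpa using this.const_mul (L / 2)
    exact ((hderiv t).sub h1).sub h2
  have hanti : AntitoneOn h (Icc (0:ℝ) 1) := by
    apply antitoneOn_of_deriv_nonpos (convex_Icc 0 1)
    · exact fun t _ => ((hderivh t).differentiableAt).continuousAt.continuousWithinAt
    · exact fun t _ => ((hderivh t).differentiableAt).differentiableWithinAt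
    · intro t ht
      rw [interior_Icc] at ht
      rw [(hderivh t).deriv]
      have hpt : p + t • v ∈ ball c ε := hmem t ⟨le_of_lt ht.1, le_of_lt ht.2⟩
      have hip : ⟪f' (p + t • v) - f' p, v⟫_ℝ ≤ ‖f' (p + t • v) - f' p‖ * ‖v‖ :=
        real_inner_le_norm _ _
      have hlipb : ‖f' (p + t • v) - f' p‖ ≤ L * (t * ‖v‖) := by
        have := hlip _ hpt _ hp
        simpa [norm_smul, abs_of_pos ht.1] using this
      have hnv : (0:ℝ) ≤ ‖v‖ := norm_nonneg v
      have : ⟪f' (p + t • v) - f' p, v⟫_ℝ ≤ L * (t * ‖v‖) * ‖v‖ :=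
        hip.trans (mul_le_mul_of_nonneg_right hlipb hnv)
      rw [inner_sub_left] at this
      nlinarith
  have h10 : h 1 ≤ h 0 := hanti ⟨le_refl 0, zero_le_one⟩ ⟨zero_le_one, le_refl 1⟩ zero_le_one
  simp only [hh, one_smul, zero_smul, add_zero, one_pow, mul_one, one_mul] at h10
  have : p + v = q := by rw [hv]; abel
  rw [this] at h10
  linarith

/-- Converting an EReal prox-type inequality to real numbers. -/
lemma ereal_to_real {p q : EReal} {A B : ℝ} (hq : q ≠ ⊤) (hqb : q ≠ ⊥) (hpb : p ≠ ⊥)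
    (h : p + (A : EReal) ≤ q + (B : EReal)) :
    p ≠ ⊤ ∧ p.toReal + A ≤ q.toReal + B := by
  lift q to ℝ using ⟨hq, hqb⟩ with Q
  have hp : p ≠ ⊤ := by
    rintro rfl
    rw [EReal.top_add_coe, ← EReal.coe_add] at h
    exact ((EReal.coe_lt_top _).not_ge h)
  lift p to ℝ using ⟨hp, hpb⟩ with P
  rw [← EReal.coe_add, ← EReal.coe_add, EReal.coe_le_coe_iff] at h
  simpa using h

open Filter Topology Metric

private lemma rbound (r s δ ρ K C0 Cf : ℝ) (hr0 : 0 ≤ r) (hs0 : 0 ≤ s)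
    (hδpos : 0 < δ) (hδ1 : δ ≤ 1) (hδρ : δ * ρ ≤ 1 / 4) (hρpos : 0 < ρ)
    (hC0 : 0 ≤ C0) (hK0 : 0 ≤ K) (hCf : 0 ≤ Cf) (hs_small : s < δ * (1 + Cf))
    (step2 : r ^ 2 ≤ s ^ 2 + 2 * δ * K + 2 * δ * ρ * (C0 + r) ^ 2) :
    r ^ 2 ≤ δ * (4 * (1 + Cf) ^ 2 + 8 * K + 8 * ρ * C0 ^ 2 + 64 * ρ ^ 2 * C0 ^ 2) := by
  have amgm : 4 * δ * ρ * C0 * r ≤ r ^ 2 / 4 + 16 * δ ^ 2 * ρ ^ 2 * C0 ^ 2 := by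
    nlinarith [sq_nonneg (r / 2 - 4 * δ * ρ * C0)]
  have hcub : 2 * δ * ρ * r ^ 2 ≤ r ^ 2 / 2 := by
    nlinarith [mul_le_mul_of_nonneg_right hδρ (sq_nonneg r)]
  have hδsq : δ ^ 2 ≤ δ := by nlinarith [hδpos, hδ1]
  have hsq : s ^ 2 ≤ δ * (1 + Cf) ^ 2 := by
    have e1 : s ^ 2 ≤ (δ * (1 + Cf)) ^ 2 := by
      have := pow_le_pow_left₀ hs0 hs_small.le 2
      linarith
    nlinarith [e1, mul_le_mul_of_nonneg_right hδsq (sq_nonneg (1 + Cf))]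
  nlinarith [step2, amgm, hcub, hsq, mul_le_mul_of_nonneg_right hδsq
    (by positivity : (0:ℝ) ≤ 64 * ρ ^ 2 * C0 ^ 2)]

set_option maxHeartbeats 1000000 in
/-- The scenario of Proposition 4.2 (failure of sufficient decrease along vanishing
stepsizes) is impossible; hence accepted stepsizes along bounded subsequences are
bounded away from zero. -/
theorem stmt11 {n : ℕ} (f : EuclideanSpace ℝ (Fin n) → ℝ)
    (f' : EuclideanSpace ℝ (Fin n) → EuclideanSpace ℝ (Fin n))
    (hdiff : ∀ x, HasGradientAt f (f' x) x)
    (g : EuclideanSpace ℝ (Fin n) → EReal)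
    (hproper : ProperFn g) (hlsc : LowerSemicontinuous g)
    (τg : ℝ) (hτg : 0 < τg)
    (hthr : ∀ τ : ℝ, 0 < τ → τ < τg → ProxBddAt g τ)
    (m : ℝ) (hbdd : ∀ y, (m : EReal) ≤ (f y : EReal) + g y)
    (hloclip : ∀ x : EuclideanSpace ℝ (Fin n), g x < ⊤ →
      ∃ L : ℝ, 0 ≤ L ∧ ∃ ε : ℝ, 0 < ε ∧
        ∀ y ∈ ball x ε, ∀ z ∈ ball x ε, ‖f' y - f' z‖ ≤ L * ‖y - z‖)
    (β : ℝ) (hβ : β ∈ Set.Ioo (0 : ℝ) 1) (a : ℝ) (ha : 0 < a)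
    (x : ℕ → EuclideanSpace ℝ (Fin n)) (xstar : EuclideanSpace ℝ (Fin n))
    (hx : Tendsto x atTop (𝓝 xstar)) (hstar : g xstar < ⊤)
    (τ : ℕ → ℝ) (hτpos : ∀ ν, 0 < τ ν) (hτlt : ∀ ν, τ ν / β < τg)
    (hτ0 : Tendsto τ atTop (𝓝 0))
    (d : ℕ → EuclideanSpace ℝ (Fin n)) (hd0 : ∀ ν, d ν ≠ 0)
    (hprox : ∀ ν, x ν + d ν ∈ proxSet g (τ ν / β) (x ν - (τ ν / β) • f' (x ν)))
    (hfail : ∀ ν, (f (x ν) : EReal) + g (x ν)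
        < (f (x ν + d ν) : EReal) + g (x ν + d ν) + ((a * ‖d ν‖ ^ 2 : ℝ) : EReal)) :
    False := by
  obtain ⟨hβ0, hβ1⟩ := hβ
  obtain ⟨L, hL, ε, hε, hlip⟩ := hloclip xstar hstar
  set Gs : ℝ := (g xstar).toReal with hGsdef
  have hGs : g xstar = (Gs : EReal) := (EReal.coe_toReal hstar.ne (hproper.1 xstar)).symm
  -- prox-boundedness at τ0 = τg/2
  set τ0 : ℝ := τg / 2 with hτ0def
  have hτ0pos : 0 < τ0 := by positivity
  obtain ⟨c, hc⟩ := hthr τ0 hτ0pos (by rw [hτ0def]; linarith)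
  set ρ : ℝ := 1 / (2 * τ0) with hρdef
  have hρpos : 0 < ρ := by positivity
  have hτρ : τ0 * ρ = 1 / 2 := by rw [hρdef]; field_simp
  -- bound on the gradient near xstar
  set Cf : ℝ := ‖f' xstar‖ + L * ε with hCfdef
  have hCf : 0 ≤ Cf := by positivity
  have hCfb : ∀ z ∈ ball xstar ε, ‖f' z‖ ≤ Cf := by
    intro z hz
    have h1 : ‖f' z - f' xstar‖ ≤ L * ‖z - xstar‖ := hlip z hz xstar (mem_ball_self hε)
    have h2 : ‖z - xstar‖ ≤ ε := by
      rw [mem_ball, dist_eq_norm] at hz; exact hz.le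
    have h3 : ‖f' z‖ ≤ ‖f' xstar‖ + ‖f' z - f' xstar‖ := by
      have := norm_add_le (f' xstar) (f' z - f' xstar)
      simpa using this
    have h4 : L * ‖z - xstar‖ ≤ L * ε := mul_le_mul_of_nonneg_left h2 hL
    rw [hCfdef]; linarith
  -- constants
  set C0 : ℝ := ‖xstar‖ + 1 + Cf with hC0def
  have hC0 : 0 ≤ C0 := by positivity
  set K : ℝ := max (Gs - c) 0 with hKdef
  have hK1 : Gs - c ≤ K := le_max_left _ _
  have hK0 : 0 ≤ K := le_max_right _ _
  set B' : ℝ := 4 * (1 + Cf) ^ 2 + 8 * K + 8 * ρ * C0 ^ 2 + 64 * ρ ^ 2 * C0 ^ 2 with hB'def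
  have hB'0 : 0 ≤ B' := by positivity
  set δ : ℝ := min (min 1 (τ0 / 2))
      (min (ε / (2 * (1 + Cf))) (min (ε ^ 2 / (4 * (B' + 1))) (1 / (L + 2 * a)))) with hδdef
  have hδpos : 0 < δ := by
    apply lt_min (lt_min one_pos (by positivity))
    exact lt_min (by positivity) (lt_min (by positivity) (by positivity))
  have hδ1 : δ ≤ 1 := le_trans (min_le_left _ _) (min_le_left _ _)
  have hδ2 : δ ≤ τ0 / 2 := le_trans (min_le_left _ _) (min_le_right _ _)
  have hδ3 : 2 * δ * (1 + Cf) ≤ ε := by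
    have h : δ ≤ ε / (2 * (1 + Cf)) := (min_le_right _ _).trans (min_le_left _ _)
    rw [le_div_iff₀ (by positivity)] at h
    linarith
  have hδ4 : δ * (4 * (B' + 1)) ≤ ε ^ 2 := by
    have h : δ ≤ ε ^ 2 / (4 * (B' + 1)) :=
      (min_le_right _ _).trans ((min_le_right _ _).trans (min_le_left _ _))
    rw [le_div_iff₀ (by positivity)] at h
    exact h
  have hδ5 : δ * (L + 2 * a) ≤ 1 := by
    have h : δ ≤ 1 / (L + 2 * a) :=
      (min_le_right _ _).trans ((min_le_right _ _).trans (min_le_right _ _))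
    rw [le_div_iff₀ (by positivity)] at h
    exact h
  have hδρ : δ * ρ ≤ 1 / 4 := by
    have := mul_le_mul_of_nonneg_right hδ2 hρpos.le
    linarith [this, hτρ]
  -- pick ν far enough
  have hτ' : Tendsto (fun ν => τ ν / β) atTop (𝓝 0) := by
    have := hτ0.div_const β
    simpa using this
  have hev1 : ∀ᶠ ν in atTop, x ν ∈ ball xstar δ := hx (Metric.ball_mem_nhds xstar hδpos)
  have hev2 : ∀ᶠ ν in atTop, τ ν / β < δ := hτ'.eventually (gt_mem_nhds hδpos)
  obtain ⟨ν, hxν, hτν⟩ := (hev1.and hev2).exists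
  have hproxν := hprox ν
  have hfailν := hfail ν
  set T : ℝ := τ ν / β with hTdef
  have hT : 0 < T := div_pos (hτpos ν) hβ0
  have hTδ : T < δ := hτν
  set u := x ν + d ν with hudef
  set yy := x ν - T • f' (x ν) with hyydef
  simp only [proxSet, Set.mem_setOf_eq] at hproxν
  -- basic norm facts
  have hxd : ‖x ν - xstar‖ < δ := by
    rw [mem_ball, dist_eq_norm] at hxν; exact hxν
  have hxball : x ν ∈ ball xstar ε := by
    rw [mem_ball, dist_eq_norm]
    linarith [hxd, hδ3, mul_nonneg hδpos.le hCf, hε]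
  have hCfx : ‖f' (x ν)‖ ≤ Cf := hCfb _ hxball
  have hs : ‖yy - xstar‖ < δ * (1 + Cf) := by
    have e : yy - xstar = (x ν - xstar) + (-(T • f' (x ν))) := by rw [hyydef]; abel
    have h1 : ‖yy - xstar‖ ≤ ‖x ν - xstar‖ + ‖T • f' (x ν)‖ := by
      rw [e]
      refine (norm_add_le _ _).trans ?_
      rw [norm_neg]
    have h2 : ‖T • f' (x ν)‖ = T * ‖f' (x ν)‖ := by
      rw [norm_smul, Real.norm_eq_abs, abs_of_pos hT]
    have h3 : T * ‖f' (x ν)‖ ≤ δ * Cf := by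
      have := mul_le_mul hTδ.le hCfx (norm_nonneg _) hδpos.le
      linarith
    rw [h2] at h1
    linarith [h1, h3, hxd]
  -- finiteness of g values
  have hgx_top : g (x ν) ≠ ⊤ := by
    intro htop
    rw [htop, EReal.add_top_of_ne_bot (EReal.coe_ne_bot _)] at hfailν
    exact (not_top_lt) hfailν
  set Gx : ℝ := (g (x ν)).toReal with hGxdef
  have hGx : g (x ν) = (Gx : EReal) := (EReal.coe_toReal hgx_top (hproper.1 _)).symm
  -- first prox inequality (vs x ν): finiteness of g u and real form
  obtain ⟨hgu_top, R1⟩ := ereal_to_real hgx_top (hproper.1 _) (hproper.1 u) (hproxν (x ν))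
  set Gu : ℝ := (g u).toReal with hGudef
  have hGu : g u = (Gu : EReal) := (EReal.coe_toReal hgu_top (hproper.1 _)).symm
  -- second prox inequality (vs xstar) in real form
  obtain ⟨_, R2⟩ := ereal_to_real hstar.ne (hproper.1 _) (hproper.1 u) (hproxν xstar)
  rw [← hGxdef] at R1
  -- prox lower bound at u in real form
  have Rc : c ≤ Gu + ρ * ‖u‖ ^ 2 := by
    have h := hc u
    rw [hGu, ← EReal.coe_add] at h
    have h' := EReal.coe_le_coe_iff.mp h
    have : (1 : ℝ) / (2 * τ0) = ρ := rfl
    linarith [h']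
  -- multiply the prox inequalities by 2T
  have emul : ∀ A : ℝ, 2 * T * (1 / (2 * T) * A) = A := by
    intro A; field_simp
  have R2m := mul_le_mul_of_nonneg_left R2 (by positivity : (0:ℝ) ≤ 2 * T)
  rw [mul_add, mul_add, emul, emul] at R2m
  -- R2m : 2T*Gu + ‖yy-u‖² ≤ 2T*Gs + ‖yy-xstar‖²
  have R1m := mul_le_mul_of_nonneg_left R1 (by positivity : (0:ℝ) ≤ 2 * T)
  rw [mul_add, mul_add, emul, emul] at R1m
  -- bound r := ‖yy - u‖
  set r : ℝ := ‖yy - u‖ with hrdef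
  have hr0 : 0 ≤ r := norm_nonneg _
  set s : ℝ := ‖yy - xstar‖ with hsdef
  have hs0 : 0 ≤ s := norm_nonneg _
  have hnu : ‖u‖ ≤ C0 + r := by
    have h1 : ‖u‖ ≤ ‖yy‖ + ‖u - yy‖ := by
      have := norm_add_le yy (u - yy); simpa using this
    have h2 : ‖yy‖ ≤ ‖xstar‖ + ‖yy - xstar‖ := by
      have := norm_add_le xstar (yy - xstar); simpa using this
    have h3 : ‖u - yy‖ = r := (norm_sub_rev u yy).trans hrdef.symm
    have h4 : s ≤ 1 + Cf := by
      have h5 : δ * (1 + Cf) ≤ 1 * (1 + Cf) :=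
        mul_le_mul_of_nonneg_right hδ1 (by positivity)
      linarith [hs, h5]
    rw [h3] at h1
    rw [hC0def]
    linarith [h1, h2, h4, hsdef]
  have hs_small : s < δ * (1 + Cf) := hs
  -- step 2 : r² ≤ s² + 2δK + 2δρ(C0+r)²
  have step1 : ‖u‖ ^ 2 ≤ (C0 + r) ^ 2 := pow_le_pow_left₀ (norm_nonneg u) hnu 2
  have hGsGu : Gs - Gu ≤ K + ρ * (C0 + r) ^ 2 := by
    have := mul_le_mul_of_nonneg_left step1 hρpos.le
    linarith [Rc, hK1]
  have s2a : T * (Gs - Gu) ≤ T * (K + ρ * (C0 + r) ^ 2) :=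
    mul_le_mul_of_nonneg_left hGsGu hT.le
  have s2b : T * (K + ρ * (C0 + r) ^ 2) ≤ δ * (K + ρ * (C0 + r) ^ 2) :=
    mul_le_mul_of_nonneg_right hTδ.le (by positivity)
  have step2 : r ^ 2 ≤ s ^ 2 + 2 * δ * K + 2 * δ * ρ * (C0 + r) ^ 2 := by
    linarith [R2m, s2a, s2b, hGudef, hGsdef]
  -- step 3 : r² ≤ δ * B'
  have step3 : r ^ 2 ≤ δ * B' := by
    rw [hB'def]
    exact rbound r s δ ρ K C0 Cf hr0 hs0 hδpos hδ1 hδρ hρpos hC0 hK0 hCf hs_small step2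
  -- r ≤ ε/2 and u ∈ ball
  have hrε : r ≤ ε / 2 := by
    have h1 : δ * B' ≤ δ * (B' + 1) := by linarith [hδpos.le]
    have h2 : r ^ 2 ≤ (ε / 2) ^ 2 := by linarith [step3, h1, hδ4]
    exact le_of_pow_le_pow_left₀ two_ne_zero (by positivity) h2
  have hsε : s < ε / 2 := by linarith [hs_small, hδ3]
  have huball : u ∈ ball xstar ε := by
    rw [mem_ball, dist_eq_norm]
    have h1 : ‖u - xstar‖ ≤ ‖u - yy‖ + ‖yy - xstar‖ := by
      have := norm_add_le (u - yy) (yy - xstar); simpa using this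
    have h3 : ‖u - yy‖ = r := (norm_sub_rev u yy).trans hrdef.symm
    rw [h3] at h1
    linarith [h1, hrε, hsε, hsdef]
  -- descent lemma
  have hdesc := descent_lemma f f' hdiff L xstar ε hlip (x ν) u hxball huball
  have hud : u - x ν = d ν := by rw [hudef]; abel
  rw [hud] at hdesc
  -- inner product expansion for the first prox inequality
  have hexp : r ^ 2 = ‖d ν‖ ^ 2 + 2 * (T * ⟪f' (x ν), d ν⟫_ℝ) + ‖yy - x ν‖ ^ 2 := by
    have e1 : yy - u = -(d ν + T • f' (x ν)) := by rw [hyydef, hudef]; abel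
    have e2 : yy - x ν = -(T • f' (x ν)) := by rw [hyydef]; abel
    rw [hrdef, e1, e2, norm_neg, norm_neg]
    have := norm_add_sq_real (d ν) (T • f' (x ν))
    rw [this, real_inner_smul_right, real_inner_comm]
  -- the failure inequality in real form
  have Gfail : f (x ν) + Gx < f u + Gu + a * ‖d ν‖ ^ 2 := by
    rw [hGx, hGu] at hfailν
    exact_mod_cast hfailν
  -- final contradiction
  have hdd : 0 < ‖d ν‖ ^ 2 := by
    have : ‖d ν‖ ≠ 0 := norm_ne_zero_iff.mpr (hd0 ν)
    positivity
  have hTsmall : T * (L + 2 * a) < 1 := by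
    have := mul_lt_mul_of_pos_right hTδ (by positivity : (0:ℝ) < L + 2 * a)
    linarith
  rw [hexp] at R1m
  -- R1m : 2T*Gu + (‖d‖² + 2T⟪f',d⟫ + ‖yy-x‖²) ≤ 2T*Gx + ‖yy-x‖²
  have m1 := mul_lt_mul_of_pos_left Gfail (by positivity : (0:ℝ) < 2 * T)
  have m2 := mul_le_mul_of_nonneg_left hdesc (by positivity : (0:ℝ) ≤ 2 * T)
  have m3 := mul_lt_mul_of_pos_right hTsmall hdd
  linarith [R1m, m1, m2, m3]
end
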